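/- arXiv:1901.08716 — 5 statements merged into one kernel-verified Lean document; each statement's English description precedes it below -/
import Mathlib

section
/- For every 0 ≤ i ≤ k−1 and 0 ≤ j ≤ s−1, the rational function Z_{ij} = − ∏_{ℓ=0, ℓ≠j}^{s−1} (X^{s+i} − X^ℓ)/(X^j − X^ℓ) is a polynomial in X with integer coefficients; that is, there exists P ∈ ℤ[X] whose image in ℝ(X) equals Z_{ij}. -/
open Polynomial Finset

/-- The image of an integer polynomial in the field ℝ(X) of rational functions. -/
noncomputable def intPolyToRatFunc (P : Polynomial ℤ) : RatFunc ℝ :=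
  algebraMap (Polynomial ℝ) (RatFunc ℝ) (P.map (Int.castRingHom ℝ))


/-- Gaussian binomial coefficient as an integer polynomial. -/
noncomputable def gaussPoly : ℕ → ℕ → Polynomial ℤ
  | _, 0 => 1
  | 0, _ + 1 => 0
  | n + 1, k + 1 => gaussPoly n k + X ^ (k + 1) * gaussPoly n (k + 1)

lemma gaussPoly_zero_right (n : ℕ) : gaussPoly n 0 = 1 := by cases n <;> rfl

lemma gaussPoly_eq_zero : ∀ n k, n < k → gaussPoly n k = 0
  | 0, _ + 1, _ => rfl
  | n + 1, k + 1, h => by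
    rw [gaussPoly, gaussPoly_eq_zero n k (by omega), gaussPoly_eq_zero n (k+1) (by omega)]
    ring

lemma gaussPoly_key : ∀ n k, k ≤ n →
    gaussPoly n k * ∏ t ∈ range k, ((X : Polynomial ℤ) ^ (1 + t) - 1)
    = ∏ t ∈ range k, ((X : Polynomial ℤ) ^ (n - k + 1 + t) - 1)
  | n, 0, _ => by simp [gaussPoly_zero_right]
  | 0, k + 1, h => by omega
  | n + 1, k + 1, h => by
    have hkn : k ≤ n := by omega
    rcases Nat.eq_or_lt_of_le hkn with heq | hlt2
    · -- k = n
      subst heq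
      rw [gaussPoly, gaussPoly_eq_zero k (k+1) (by omega), mul_zero, add_zero,
        Finset.prod_range_succ, ← mul_assoc, gaussPoly_key k k le_rfl]
      simp only [Nat.sub_self, Nat.zero_add, Nat.add_sub_cancel]
      rw [Finset.prod_range_succ]
    · -- k < n
      have IH1 := gaussPoly_key n k hkn
      have IH2 := gaussPoly_key n (k + 1) hlt2
      set A := ∏ t ∈ range k, ((X:Polynomial ℤ) ^ (n - k + 1 + t) - 1) with hA
      have hIH2' : gaussPoly n (k+1) * ∏ t ∈ range (k+1), ((X:Polynomial ℤ) ^ (1 + t) - 1)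
          = ((X:Polynomial ℤ) ^ (n - k) - 1) * A := by
        rw [IH2, Finset.prod_range_succ', hA]
        rw [mul_comm]
        congr 1
        · congr 2; omega
        · apply Finset.prod_congr rfl; intro t _; congr 2; omega
      have hRHS : ∏ t ∈ range (k+1), ((X:Polynomial ℤ) ^ (n + 1 - (k+1) + 1 + t) - 1)
          = A * ((X:Polynomial ℤ) ^ (n + 1) - 1) := by
        rw [Finset.prod_range_succ]
        congr 1
        · apply Finset.prod_congr rfl; intro t _; congr 2; omega
        · congr 2; omega
      rw [gaussPoly, add_mul, hRHS, mul_assoc, hIH2',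
        Finset.prod_range_succ, ← mul_assoc, IH1]
      have h4 : (X:Polynomial ℤ) ^ (k+1) * (X:Polynomial ℤ) ^ (n - k) = X ^ (n+1) := by
        rw [← pow_add]; congr 1; omega
      linear_combination A * h4

lemma rise_prod (m j : ℕ) (h : j ≤ m) :
    ∏ ℓ ∈ range j, ((X : Polynomial ℤ) ^ m - X ^ ℓ)
    = X ^ (∑ ℓ ∈ range j, ℓ) * ∏ t ∈ range j, ((X : Polynomial ℤ) ^ (m - j + 1 + t) - 1) := by
  have h1 : ∀ ℓ ∈ range j, ((X : Polynomial ℤ) ^ m - X ^ ℓ)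
      = X ^ ℓ * ((X : Polynomial ℤ) ^ (m - ℓ) - 1) := by
    intro ℓ hℓ
    rw [Finset.mem_range] at hℓ
    rw [mul_sub, mul_one, ← pow_add]
    congr 2
    omega
  rw [Finset.prod_congr rfl h1, Finset.prod_mul_distrib, Finset.prod_pow_eq_pow_sum]
  congr 1
  rw [← Finset.prod_range_reflect (fun t => (X : Polynomial ℤ) ^ (m - j + 1 + t) - 1) j]
  apply Finset.prod_congr rfl
  intro ℓ hℓ
  rw [Finset.mem_range] at hℓ
  congr 2
  omega

lemma rise_eq_gauss (m j : ℕ) (h : j ≤ m) :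
    ∏ ℓ ∈ range j, ((X : Polynomial ℤ) ^ m - X ^ ℓ)
    = gaussPoly m j * ∏ ℓ ∈ range j, ((X : Polynomial ℤ) ^ j - X ^ ℓ) := by
  rw [rise_prod m j h, rise_prod j j le_rfl, ← gaussPoly_key m j h]
  simp only [Nat.sub_self, Nat.zero_add]
  ring

lemma star_identity (s i j : ℕ) (hs : 1 ≤ s) (hj : j < s) :
    ((-1 : Polynomial ℤ) ^ (s - 1 - j + 1) * X ^ ((s - 1 - j) + ∑ t ∈ range (s - 1 - j), t)
        * gaussPoly (s + i) j * gaussPoly (s + i - j - 1) (s - 1 - j)) *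
      ∏ ℓ ∈ (range s).erase j, ((X : Polynomial ℤ) ^ j - X ^ ℓ)
    = - ∏ ℓ ∈ (range s).erase j, ((X : Polynomial ℤ) ^ (s + i) - X ^ ℓ) := by
  set m := s + i with hm
  set r := s - 1 - j with hr
  set σ := ∑ t ∈ range r, t with hσ
  have hsplit : ∀ f : ℕ → Polynomial ℤ,
      ∏ ℓ ∈ (range s).erase j, f ℓ = (∏ ℓ ∈ range j, f ℓ) * ∏ ℓ ∈ Ico (j+1) s, f ℓ := by
    intro f
    rw [show (range s).erase j = range j ∪ Ico (j+1) s by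
      ext x; simp only [Finset.mem_erase, Finset.mem_range, Finset.mem_union, Finset.mem_Ico]
      omega]
    exact Finset.prod_union (by
      rw [Finset.disjoint_left]
      intro a ha hb
      rw [Finset.mem_range] at ha
      rw [Finset.mem_Ico] at hb
      omega)
  rw [hsplit, hsplit]
  have hrr : s - (j + 1) = r := by omega
  have hIcoN : ∏ ℓ ∈ Ico (j+1) s, ((X : Polynomial ℤ) ^ m - X ^ ℓ)
      = X ^ (j * r) * X ^ r * (gaussPoly (m - j - 1) r * (X ^ σ
          * ∏ t ∈ range r, ((X : Polynomial ℤ) ^ (1 + t) - 1))) := by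
    rw [Finset.prod_Ico_eq_prod_range, hrr]
    have h1 : ∀ t ∈ range r, ((X : Polynomial ℤ) ^ m - X ^ (j + 1 + t))
        = X ^ (j + 1) * ((X : Polynomial ℤ) ^ (m - j - 1) - X ^ t) := by
      intro t ht
      rw [mul_sub, ← pow_add, ← pow_add]
      congr 2 <;> omega
    rw [Finset.prod_congr rfl h1, Finset.prod_mul_distrib, Finset.prod_const,
      ← pow_mul, rise_eq_gauss (m - j - 1) r (by omega),
      rise_prod r r le_rfl, Finset.card_range]
    simp only [Nat.sub_self, Nat.zero_add, ← hσ]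
    rw [show (j + 1) * r = j * r + r by ring, pow_add]
  have hIcoD : ∏ ℓ ∈ Ico (j+1) s, ((X : Polynomial ℤ) ^ j - X ^ ℓ)
      = (-1) ^ r * X ^ (j * r) * ∏ t ∈ range r, ((X : Polynomial ℤ) ^ (1 + t) - 1) := by
    rw [Finset.prod_Ico_eq_prod_range, hrr]
    have h1 : ∀ t ∈ range r, ((X : Polynomial ℤ) ^ j - X ^ (j + 1 + t))
        = (-1) * X ^ j * ((X : Polynomial ℤ) ^ (1 + t) - 1) := by
      intro t ht
      rw [show ((-1 : Polynomial ℤ)) * X ^ j * ((X : Polynomial ℤ) ^ (1 + t) - 1)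
          = X ^ j - X ^ j * X ^ (1 + t) by ring, ← pow_add]
      congr 2
      omega
    rw [Finset.prod_congr rfl h1, Finset.prod_mul_distrib, Finset.prod_mul_distrib,
      Finset.prod_const, Finset.prod_const, ← pow_mul, Finset.card_range]
  rw [hIcoN, hIcoD, rise_eq_gauss m j (by omega)]
  set c : Polynomial ℤ := (-1 : Polynomial ℤ) ^ r with hc
  have hcc : c * c = 1 := by
    rw [hc, ← pow_add, ← two_mul, pow_mul]
    norm_num
  rw [pow_succ, pow_add]
  set G1 := gaussPoly m j
  set G2 := gaussPoly (m - j - 1) r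
  set Dlo := ∏ ℓ ∈ range j, ((X : Polynomial ℤ) ^ j - X ^ ℓ)
  set Dr := ∏ t ∈ range r, ((X : Polynomial ℤ) ^ (1 + t) - 1)
  linear_combination (-(X ^ (j * r) * X ^ r * X ^ σ * G1 * G2 * Dlo * Dr)) * hcc

noncomputable def φZ : Polynomial ℤ →+* RatFunc ℝ :=
  (algebraMap (Polynomial ℝ) (RatFunc ℝ)).comp (Polynomial.mapRingHom (Int.castRingHom ℝ))

lemma φZ_apply (P : Polynomial ℤ) : φZ P = intPolyToRatFunc P := rfl

lemma φZ_X : φZ X = RatFunc.X := by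
  simp [φZ, RatFunc.algebraMap_X]

lemma φZ_injective : Function.Injective φZ := by
  apply Function.Injective.comp (g := algebraMap (Polynomial ℝ) (RatFunc ℝ))
  · exact IsFractionRing.injective _ _
  · exact Polynomial.map_injective _ Int.cast_injective

/-- Each entry `Z i j = - ∏_{ℓ ≠ j} (X^(s+i) - X^ℓ)/(X^j - X^ℓ)` of the systematic generator
matrix of the `CP(n,k)` code (with `s = n - k`) is a polynomial with integer coefficients. -/
theorem cp_generator_entry_is_integer_polynomial
    (s k : ℕ) (hs : 1 ≤ s) (hk : 1 ≤ k) (i j : ℕ) (hi : i ≤ k - 1) (hj : j ≤ s - 1) :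
    ∃ P : Polynomial ℤ,
      intPolyToRatFunc P =
        - ∏ ℓ ∈ (Finset.range s).erase j,
            (((RatFunc.X : RatFunc ℝ) ^ (s + i) - RatFunc.X ^ ℓ) /
              ((RatFunc.X : RatFunc ℝ) ^ j - RatFunc.X ^ ℓ)) := by
  have hjs : j < s := by omega
  refine ⟨(-1 : Polynomial ℤ) ^ (s - 1 - j + 1)
      * X ^ ((s - 1 - j) + ∑ t ∈ range (s - 1 - j), t)
      * gaussPoly (s + i) j * gaussPoly (s + i - j - 1) (s - 1 - j), ?_⟩
  rw [← φZ_apply]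
  have hD : ∀ ℓ ∈ (Finset.range s).erase j,
      ((RatFunc.X : RatFunc ℝ) ^ j - RatFunc.X ^ ℓ) ≠ 0 := by
    intro ℓ hℓ
    have hne : ℓ ≠ j := (Finset.mem_erase.1 hℓ).1
    rw [← φZ_X, ← map_pow, ← map_pow, ← map_sub]
    intro h
    have h0 : (X : Polynomial ℤ) ^ j - X ^ ℓ = 0 := by
      apply φZ_injective
      rw [h, map_zero]
    have := sub_eq_zero.1 h0
    apply hne
    have := congrArg natDegree this
    simpa [natDegree_X_pow] using this.symm
  rw [Finset.prod_div_distrib, ← neg_div]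
  rw [eq_div_iff (Finset.prod_ne_zero_iff.2 hD)]
  have key := star_identity s i j hs hjs
  have := congrArg φZ key
  rw [map_mul, map_neg, map_prod, map_prod] at this
  simp only [map_sub, map_pow, map_mul, map_neg, map_one, φZ_X] at this ⊢
  exact this
end

section
/- When s = 3, for every 0 ≤ i ≤ k−1 and j ∈ {0,1,2}, the rational function Z_{ij} = − ∏_{ℓ=0, ℓ≠j}^{2} (X^{3+i} − X^ℓ)/(X^j − X^ℓ) equals a polynomial P ∈ ℤ[X] each of whose coefficients has absolute value at most k. -/
open Polynomial Finset

lemma geom_coeff_le (a m : ℕ) : |((∑ t ∈ range a, (X : Polynomial ℤ)^t).coeff m)| ≤ 1 := by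
  rw [Polynomial.finset_sum_coeff]
  simp only [Polynomial.coeff_X_pow]
  rw [Finset.sum_ite_eq (range a) m (fun _ => (1:ℤ))]
  split <;> simp

lemma sum_coeff_le (b : ℕ) (e : ℕ → ℕ) (q : Polynomial ℤ) (hq : ∀ m, |q.coeff m| ≤ 1) (m : ℕ) :
    |((∑ u ∈ range b, (X:Polynomial ℤ)^(e u) * q).coeff m)| ≤ (b : ℤ) := by
  rw [Polynomial.finset_sum_coeff]
  calc |∑ u ∈ range b, ((X:Polynomial ℤ)^(e u) * q).coeff m|
      ≤ ∑ u ∈ range b, |((X:Polynomial ℤ)^(e u) * q).coeff m| := abs_sum_le_sum_abs _ _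
    _ ≤ ∑ u ∈ range b, 1 := by
        apply Finset.sum_le_sum
        intro u _
        rw [mul_comm, coeff_mul_X_pow']
        split
        · exact hq _
        · simp
    _ = b := by simp

lemma coeff_bound (b : ℕ) (e : ℕ → ℕ) (a : ℕ) (k : ℕ) (hb : b ≤ k) (m : ℕ) :
    |((∑ u ∈ range b, (X:Polynomial ℤ)^(e u) * ∑ t ∈ range a, (X:Polynomial ℤ)^t).coeff m)| ≤ (k : ℤ) :=
  le_trans (sum_coeff_le b e _ (geom_coeff_le a) m) (by exact_mod_cast hb)

lemma map_shape (b : ℕ) (e : ℕ → ℕ) (a : ℕ) :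
    intPolyToRatFunc (∑ u ∈ range b, X^(e u) * ∑ t ∈ range a, X^t)
      = ∑ u ∈ range b, (RatFunc.X : RatFunc ℝ)^(e u) * ∑ t ∈ range a, (RatFunc.X : RatFunc ℝ)^t := by
  simp [intPolyToRatFunc, Polynomial.map_sum, Polynomial.map_mul, Polynomial.map_pow,
    map_sum, map_mul, map_pow, RatFunc.algebraMap_X]

lemma map_neg' (P : Polynomial ℤ) : intPolyToRatFunc (-P) = - intPolyToRatFunc P := by
  simp [intPolyToRatFunc, Polynomial.map_neg, map_neg]

lemma xpowne (a b : ℕ) (hab : a ≠ b) : (RatFunc.X : RatFunc ℝ)^a ≠ (RatFunc.X : RatFunc ℝ)^b := by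
  rw [← RatFunc.algebraMap_X, ← map_pow, ← map_pow]
  intro h
  have := RatFunc.algebraMap_injective ℝ h
  have h2 := congrArg (fun p => Polynomial.coeff p a) this
  simp [Polynomial.coeff_X_pow, hab, Ne.symm hab] at h2

lemma shift_sum (b c : ℕ) :
    ∑ u ∈ range b, (RatFunc.X : RatFunc ℝ)^(c+2*u)
      = (RatFunc.X : RatFunc ℝ)^c * ∑ u ∈ range b, ((RatFunc.X : RatFunc ℝ)^2)^u := by
  rw [Finset.mul_sum]
  exact Finset.sum_congr rfl fun u _ => by rw [← pow_mul, ← pow_add]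

/-- For `s = 3`, each generator entry `Z i j = - ∏_{ℓ ≠ j, ℓ < 3} (X^(3+i) - X^ℓ)/(X^j - X^ℓ)`
equals a polynomial with integer coefficients of absolute value at most `k`. -/
theorem cp_generator_entry_coeffs_s_three
    (k : ℕ) (hk : 1 ≤ k) (i j : ℕ) (hi : i ≤ k - 1) (hj : j ≤ 2) :
    ∃ P : Polynomial ℤ,
      (∀ m : ℕ, |P.coeff m| ≤ (k : ℤ)) ∧
      intPolyToRatFunc P =
        - ∏ ℓ ∈ (Finset.range 3).erase j,
            (((RatFunc.X : RatFunc ℝ) ^ (3 + i) - RatFunc.X ^ ℓ) /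
              ((RatFunc.X : RatFunc ℝ) ^ j - RatFunc.X ^ ℓ)) := by
  set x : RatFunc ℝ := RatFunc.X with hxdef
  interval_cases j
  · -- j = 0
    have he : (Finset.range 3).erase 0 = {1, 2} := by decide
    have h01 : x^0 - x^1 ≠ 0 := sub_ne_zero.mpr (xpowne 0 1 (by norm_num))
    have h02 : x^0 - x^2 ≠ 0 := sub_ne_zero.mpr (xpowne 0 2 (by norm_num))
    rcases Nat.even_or_odd i with ⟨m, hm⟩ | ⟨m, hm⟩
    · subst hm
      refine ⟨-(∑ u ∈ range (m+1), X^(3+2*u) * ∑ t ∈ range (m+m+1), X^t), ?_, ?_⟩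
      · intro m'
        rw [Polynomial.coeff_neg, abs_neg]
        exact coeff_bound _ _ _ k (by omega) m'
      · rw [map_neg', map_shape, he, Finset.prod_pair (by norm_num), neg_inj,
          div_mul_div_comm, eq_div_iff (mul_ne_zero h01 h02)]
        simp only [← Finset.sum_mul]
        rw [shift_sum (m+1) 3]
        have hS := geom_sum_mul x (m+m+1)
        have hT := geom_sum_mul (x^2) (m+1)
        linear_combination (x^3 * (∑ u ∈ range (m+1), (x^2)^u) * (x^2-1)) * hS +
          (x^3 * (x^(m+m+1)-1)) * hT
    · subst hm
      refine ⟨-(∑ u ∈ range (m+1), X^(3+2*u) * ∑ t ∈ range (2*m+3), X^t), ?_, ?_⟩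
      · intro m'
        rw [Polynomial.coeff_neg, abs_neg]
        exact coeff_bound _ _ _ k (by omega) m'
      · rw [map_neg', map_shape, he, Finset.prod_pair (by norm_num), neg_inj,
          div_mul_div_comm, eq_div_iff (mul_ne_zero h01 h02)]
        simp only [← Finset.sum_mul]
        rw [shift_sum (m+1) 3]
        have hS := geom_sum_mul x (2*m+3)
        have hT := geom_sum_mul (x^2) (m+1)
        linear_combination (x^3 * (∑ u ∈ range (m+1), (x^2)^u) * (x^2-1)) * hS +
          (x^3 * (x^(2*m+3)-1)) * hT
  · -- j = 1
    have he : (Finset.range 3).erase 1 = {0, 2} := by decide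
    have h10 : x^1 - x^0 ≠ 0 := sub_ne_zero.mpr (xpowne 1 0 (by norm_num))
    have h12 : x^1 - x^2 ≠ 0 := sub_ne_zero.mpr (xpowne 1 2 (by norm_num))
    refine ⟨∑ u ∈ range (i+1), X^(1+u) * ∑ t ∈ range (i+3), X^t, ?_, ?_⟩
    · intro m'
      exact coeff_bound _ _ _ k (by omega) m'
    · rw [map_shape, he, Finset.prod_pair (by norm_num),
        div_mul_div_comm, ← neg_div, eq_div_iff (mul_ne_zero h10 h12)]
      simp only [← Finset.sum_mul]
      have h1 := geom_sum_mul x (i+1)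
      have h3 := geom_sum_mul x (i+3)
      have hs : ∑ u ∈ range (i+1), x^(1+u) = x * ∑ u ∈ range (i+1), x^u := by
        rw [Finset.mul_sum]; exact Finset.sum_congr rfl fun u _ => by ring
      rw [hs]
      linear_combination (x*(x^1 - x^2)*(∑ u ∈ range (i+1), x^u)) * h3 +
        (-x^2*(x^(3+i)-1)) * h1
  · -- j = 2
    have he : (Finset.range 3).erase 2 = {0, 1} := by decide
    have h20 : x^2 - x^0 ≠ 0 := sub_ne_zero.mpr (xpowne 2 0 (by norm_num))
    have h21 : x^2 - x^1 ≠ 0 := sub_ne_zero.mpr (xpowne 2 1 (by norm_num))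
    rcases Nat.even_or_odd i with ⟨m, hm⟩ | ⟨m, hm⟩
    · subst hm
      refine ⟨-(∑ u ∈ range (m+1), X^(2*u) * ∑ t ∈ range (m+m+3), X^t), ?_, ?_⟩
      · intro m'
        rw [Polynomial.coeff_neg, abs_neg]
        exact coeff_bound _ _ _ k (by omega) m'
      · rw [map_neg', map_shape, he, Finset.prod_pair (by norm_num), neg_inj,
          div_mul_div_comm, eq_div_iff (mul_ne_zero h20 h21)]
        simp only [← Finset.sum_mul]
        have hs : ∑ u ∈ range (m+1), x^(2*u) = ∑ u ∈ range (m+1), (x^2)^u := by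
          exact Finset.sum_congr rfl fun u _ => by rw [← pow_mul]
        rw [hs]
        have hS := geom_sum_mul x (m+m+3)
        have hT := geom_sum_mul (x^2) (m+1)
        linear_combination ((∑ t ∈ range (m+m+3), x^t) * (x^2-x)) * hT +
          (x*((x^2)^(m+1)-1)) * hS
    · subst hm
      refine ⟨-(∑ u ∈ range (m+2), X^(2*u) * ∑ t ∈ range (2*m+3), X^t), ?_, ?_⟩
      · intro m'
        rw [Polynomial.coeff_neg, abs_neg]
        exact coeff_bound _ _ _ k (by omega) m'
      · rw [map_neg', map_shape, he, Finset.prod_pair (by norm_num), neg_inj,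
          div_mul_div_comm, eq_div_iff (mul_ne_zero h20 h21)]
        simp only [← Finset.sum_mul]
        have hs : ∑ u ∈ range (m+2), x^(2*u) = ∑ u ∈ range (m+2), (x^2)^u := by
          exact Finset.sum_congr rfl fun u _ => by rw [← pow_mul]
        rw [hs]
        have hS := geom_sum_mul x (2*m+3)
        have hT := geom_sum_mul (x^2) (m+2)
        linear_combination ((∑ t ∈ range (2*m+3), x^t) * (x^2-x)) * hT +
          (x*((x^2)^(m+2)-1)) * hS
end

section
/- Let s ≥ 1, let 0 ≤ m ≤ s−1, and let t be any natural number. Then in the field ℝ(X) of rational functions the identity ∑_{j=0}^{s−1} X^{m j} · ∏_{ℓ=0, ℓ≠j}^{s−1} (X^{t} − X^{ℓ})/(X^{j} − X^{ℓ}) = X^{m t} holds. In particular, with Z_{ij} = − ∏_{ℓ≠j} (X^{s+i} − X^{ℓ})/(X^{j} − X^{ℓ}), one has ∑_{j=0}^{s−1} Z_{ij} X^{m j} + X^{m(s+i)} = 0 for all 0 ≤ m ≤ s−1 and all i ≥ 0, i.e., the systematic generator matrix G_{n,k}(X) = [Z I_k] satisfies G_{n,k}(X) H_{n,k}(X)^T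 = 0. -/
open Finset

lemma ratfunc_X_pow_inj : Function.Injective (fun n : ℕ => (RatFunc.X : RatFunc ℝ) ^ n) := by
  intro a b h
  simp only [← RatFunc.algebraMap_X (K := ℝ), ← map_pow] at h
  have h2 := RatFunc.algebraMap_injective ℝ h
  have := congrArg Polynomial.natDegree h2
  simpa [Polynomial.natDegree_X_pow] using this

/-- Lagrange interpolation at the nodes `X^0, …, X^(s-1)` in ℝ(X): for `m < s` and any `t`,
`∑_{j<s} X^(m j) ∏_{ℓ ≠ j} (X^t - X^ℓ)/(X^j - X^ℓ) = X^(m t)`.  In particular, with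
`Z i j = -∏_{ℓ ≠ j} (X^(s+i) - X^ℓ)/(X^j - X^ℓ)`, one has
`∑_{j<s} Z i j · X^(m j) + X^(m (s+i)) = 0` for all `i`, i.e. the systematic generator matrix
`G = [Z  I]` satisfies `G Hᵀ = 0`. -/
theorem cp_generator_annihilates_parity (s : ℕ) (hs : 1 ≤ s) (m : ℕ) (hm : m < s) :
    (∀ t : ℕ,
      ∑ j ∈ Finset.range s, (RatFunc.X : RatFunc ℝ) ^ (m * j) *
          ∏ ℓ ∈ (Finset.range s).erase j,
            (((RatFunc.X : RatFunc ℝ) ^ t - RatFunc.X ^ ℓ) /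
              ((RatFunc.X : RatFunc ℝ) ^ j - RatFunc.X ^ ℓ)) =
        (RatFunc.X : RatFunc ℝ) ^ (m * t))
    ∧
    (∀ i : ℕ,
      ∑ j ∈ Finset.range s,
          (- ∏ ℓ ∈ (Finset.range s).erase j,
              (((RatFunc.X : RatFunc ℝ) ^ (s + i) - RatFunc.X ^ ℓ) /
                ((RatFunc.X : RatFunc ℝ) ^ j - RatFunc.X ^ ℓ))) *
            (RatFunc.X : RatFunc ℝ) ^ (m * j) +
        (RatFunc.X : RatFunc ℝ) ^ (m * (s + i)) = 0) := by
  have key : ∀ t : ℕ,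
      ∑ j ∈ Finset.range s, (RatFunc.X : RatFunc ℝ) ^ (m * j) *
          ∏ ℓ ∈ (Finset.range s).erase j,
            (((RatFunc.X : RatFunc ℝ) ^ t - RatFunc.X ^ ℓ) /
              ((RatFunc.X : RatFunc ℝ) ^ j - RatFunc.X ^ ℓ)) =
        (RatFunc.X : RatFunc ℝ) ^ (m * t) := by
    intro t
    set v : ℕ → RatFunc ℝ := fun j => (RatFunc.X : RatFunc ℝ) ^ j with hv
    have hinj : Set.InjOn v (Finset.range s) := fun a _ b _ h => ratfunc_X_pow_inj h
    have hdeg : (Polynomial.X ^ m : Polynomial (RatFunc ℝ)).degree < (Finset.range s).card := by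
      rw [Polynomial.degree_X_pow, Finset.card_range]
      exact_mod_cast hm
    have heq := Lagrange.eq_interpolate (s := Finset.range s) (v := v)
      (f := (Polynomial.X ^ m : Polynomial (RatFunc ℝ))) hinj hdeg
    have heval := congrArg (Polynomial.eval ((RatFunc.X : RatFunc ℝ) ^ t)) heq
    rw [Lagrange.interpolate_apply, Polynomial.eval_finset_sum] at heval
    simp only [Polynomial.eval_pow, Polynomial.eval_X, Polynomial.eval_mul,
      Polynomial.eval_C] at heval
    calc ∑ j ∈ Finset.range s, (RatFunc.X : RatFunc ℝ) ^ (m * j) *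
          ∏ ℓ ∈ (Finset.range s).erase j,
            (((RatFunc.X : RatFunc ℝ) ^ t - RatFunc.X ^ ℓ) /
              ((RatFunc.X : RatFunc ℝ) ^ j - RatFunc.X ^ ℓ))
        = ∑ j ∈ Finset.range s, (v j) ^ m *
            Polynomial.eval ((RatFunc.X : RatFunc ℝ) ^ t) (Lagrange.basis (Finset.range s) v j) := by
          refine Finset.sum_congr rfl fun j hj => ?_
          congr 1
          · rw [hv]; ring
          · rw [Lagrange.basis, Polynomial.eval_prod]
            refine Finset.prod_congr rfl fun ℓ hℓ => ?_
            rw [Lagrange.basisDivisor]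
            simp [div_eq_inv_mul, hv]
      _ = ((RatFunc.X : RatFunc ℝ) ^ t) ^ m := heval.symm
      _ = (RatFunc.X : RatFunc ℝ) ^ (m * t) := by rw [← pow_mul, mul_comm]
  refine ⟨key, fun i => ?_⟩
  have h2 : ∑ j ∈ Finset.range s,
      (∏ ℓ ∈ (Finset.range s).erase j,
          (((RatFunc.X : RatFunc ℝ) ^ (s + i) - RatFunc.X ^ ℓ) /
            ((RatFunc.X : RatFunc ℝ) ^ j - RatFunc.X ^ ℓ))) *
        (RatFunc.X : RatFunc ℝ) ^ (m * j) = (RatFunc.X : RatFunc ℝ) ^ (m * (s + i)) := by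
    rw [← key (s + i)]
    exact Finset.sum_congr rfl fun j _ => mul_comm _ _
  simp only [neg_mul, Finset.sum_neg_distrib, h2, neg_add_cancel]
end

section
/- Let n ≥ 1 and 1 ≤ s ≤ n. Suppose c, c' : ℤ × {0,…,n−1} → ℝ satisfy c(i,j) = 0 and c'(i,j) = 0 whenever i < 0, and both satisfy the geometric constraints ∑_{j=0}^{n−1} c(i − m·j, j) = 0 and ∑_{j=0}^{n−1} c'(i − m·j, j) = 0 for every i ∈ ℤ and every m ∈ {0, 1, …, s−1}. If S ⊆ {0,…,n−1} with |S| ≤ s and c(i,j) = c'(i,j) for all i ∈ ℤ and all j ∉ S, then c = c'. (That is, the symbols of any at most s erased columns of a CP(n, n−s) codeword are uniquely determined by the remaining columns.) -/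
open Finset

/-- Erasure recovery for the `CP(n, n-s)` code: if two codewords (families of real sequences
indexed by `ℤ × Fin n`, vanishing at negative indices and satisfying the geometric constraints
`∑_{j<n} c(i - m j, j) = 0` for all `i ∈ ℤ` and all slopes `m < s`) agree on all columns outside
a set `S` of at most `s` columns, then they are equal. -/
theorem cp_code_erasure_recovery (n s : ℕ) (hn : 1 ≤ n) (hs : 1 ≤ s) (hsn : s ≤ n)
    (c c' : ℤ → Fin n → ℝ)
    (hc0 : ∀ i : ℤ, i < 0 → ∀ j : Fin n, c i j = 0)
    (hc'0 : ∀ i : ℤ, i < 0 → ∀ j : Fin n, c' i j = 0)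
    (hc : ∀ i : ℤ, ∀ m : ℕ, m < s →
      ∑ j : Fin n, c (i - (m : ℤ) * ((j : ℕ) : ℤ)) j = 0)
    (hc' : ∀ i : ℤ, ∀ m : ℕ, m < s →
      ∑ j : Fin n, c' (i - (m : ℤ) * ((j : ℕ) : ℤ)) j = 0)
    (S : Finset (Fin n)) (hS : S.card ≤ s)
    (hagree : ∀ i : ℤ, ∀ j : Fin n, j ∉ S → c i j = c' i j) :
    c = c' := by
  classical
  set d : ℤ → Fin n → ℝ := fun i j => c i j - c' i j with hd
  have hd0 : ∀ i : ℤ, i < 0 → ∀ j : Fin n, d i j = 0 := fun i hi j => by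
    simp [hd, hc0 i hi j, hc'0 i hi j]
  have hdS : ∀ i : ℤ, ∀ j : Fin n, j ∉ S → d i j = 0 := fun i j hj => by
    simp [hd, hagree i j hj]
  have hdc : ∀ i : ℤ, ∀ m : ℕ, m < s →
      ∑ j : Fin n, d (i - (m : ℤ) * ((j : ℕ) : ℤ)) j = 0 := by
    intro i m hm
    have := hc i m hm
    have := hc' i m hm
    simp only [hd, Finset.sum_sub_distrib]
    rw [hc i m hm, hc' i m hm, sub_zero]
  -- power series per column
  set D : Fin n → PowerSeries ℝ := fun j => PowerSeries.mk (fun i => d (i : ℤ) j) with hD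
  have key : ∀ m : ℕ, m < s → ∑ j : Fin n, (PowerSeries.X : PowerSeries ℝ) ^ (m * (j : ℕ)) * D j = 0 := by
    intro m hm
    ext I
    rw [map_sum, map_zero]
    have hterm : ∀ j : Fin n,
        (PowerSeries.coeff I) ((PowerSeries.X : PowerSeries ℝ) ^ (m * (j : ℕ)) * D j)
          = d ((I : ℤ) - (m : ℤ) * ((j : ℕ) : ℤ)) j := by
      intro j
      rw [PowerSeries.coeff_X_pow_mul']
      split_ifs with h
      · rw [hD]
        simp only [PowerSeries.coeff_mk]
        congr 1
        push_cast [Nat.cast_sub h]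
        ring
      · rw [hd0]
        push_cast at h ⊢
        omega
    rw [Finset.sum_congr rfl fun j _ => hterm j]
    exact hdc (I : ℤ) m hm
  have keyS : ∀ m : ℕ, m < s →
      ∑ j ∈ S, (PowerSeries.X : PowerSeries ℝ) ^ (m * (j : ℕ)) * D j = 0 := by
    intro m hm
    have hzero : ∀ j ∈ Finset.univ, j ∉ S →
        (PowerSeries.X : PowerSeries ℝ) ^ (m * (j : ℕ)) * D j = 0 := by
      intro j _ hj
      have : D j = 0 := by
        ext k
        simp [hD, hdS _ j hj]
      simp [this]
    rw [Finset.sum_subset (Finset.subset_univ S) hzero]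
    exact key m hm
  -- Vandermonde setup
  set t := S.card with ht
  have e : Fin t ≃o S := S.orderIsoOfFin rfl
  set w : Fin t → PowerSeries ℝ := fun k => (PowerSeries.X : PowerSeries ℝ) ^ (((e k : Fin n) : ℕ)) with hw
  have hwinj : Function.Injective w := by
    intro a b hab
    have h2 : ((e a : Fin n) : ℕ) = ((e b : Fin n) : ℕ) := by
      by_contra hne
      have h1 := congrArg (PowerSeries.coeff (((e a : Fin n)) : ℕ)) hab
      simp [hw, PowerSeries.coeff_X_pow, hne] at h1
    exact e.injective (Subtype.ext (Fin.ext h2))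
  set M : Matrix (Fin t) (Fin t) (PowerSeries ℝ) := Matrix.transpose (Matrix.vandermonde w) with hM
  have hdet : M.det ≠ 0 := by
    rw [hM, Matrix.det_transpose]
    exact Matrix.det_vandermonde_ne_zero_iff.mpr hwinj
  set v : Fin t → PowerSeries ℝ := fun k => D (e k) with hv
  have hsum : ∀ (f : Fin n → PowerSeries ℝ), ∑ k : Fin t, f (e k) = ∑ j ∈ S, f j := by
    intro f
    rw [← Finset.sum_coe_sort S f]
    exact Equiv.sum_comp e.toEquiv (fun x : S => f x)
  have hMv : Matrix.mulVec M v = 0 := by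
    funext m
    have hms : (m : ℕ) < s := lt_of_lt_of_le m.isLt hS
    have h2 : ∑ k : Fin t,
        (PowerSeries.X : PowerSeries ℝ) ^ ((m : ℕ) * ((e k : Fin n) : ℕ)) * D (e k) = 0 := by
      rw [hsum (fun j => (PowerSeries.X : PowerSeries ℝ) ^ ((m : ℕ) * (j : ℕ)) * D j)]
      exact keyS (m : ℕ) hms
    simp only [Matrix.mulVec, dotProduct, Pi.zero_apply]
    rw [← h2]
    apply Finset.sum_congr rfl
    intro k _
    simp only [hM, hv, hw, Matrix.transpose_apply, Matrix.vandermonde_apply]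
    rw [← pow_mul, mul_comm ((e k : Fin n) : ℕ) (m : ℕ)]
  have hv0 : v = 0 := Matrix.eq_zero_of_mulVec_eq_zero hdet hMv
  have hDS : ∀ j : Fin n, D j = 0 := by
    intro j
    by_cases hj : j ∈ S
    · have : D (e (e.symm ⟨j, hj⟩)) = 0 := by
        have := congrFun hv0 (e.symm ⟨j, hj⟩)
        simpa [hv] using this
      simpa using this
    · ext k
      simp [hD, hdS _ j hj]
  -- conclude
  funext i j
  have hdij : d i j = 0 := by
    rcases lt_or_ge i 0 with hi | hi
    · exact hd0 i hi j
    · have := congrArg (PowerSeries.coeff i.toNat) (hDS j)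
      simp only [hD, PowerSeries.coeff_mk, map_zero] at this
      rwa [Int.toNat_of_nonneg hi] at this
  have : c i j - c' i j = 0 := hdij
  linarith
end

section
/- Let n ≥ 1, 2 ≤ s ≤ n, and let S = {t_0 < t_1 < ⋯ < t_{s−1}} ⊆ {0,…,n−1} be a set of s straggler columns. Suppose c : ℤ × {0,…,n−1} → ℝ satisfies c(i,j) = 0 for i < 0 and the slope-(s−1) constraint ∑_{j=0}^{n−1} c(i − (s−1)j, j) = 0 for all i ∈ ℤ. Then for every α with 0 ≤ α ≤ (s−1)(t_1 − t_0) − 1: (a) for every q ∈ {1,…,s−1}, α + (s−1)(t_0 − t_q) < 0, hence c(α + (s−1)(t_0 − t_q), t_q) = 0; and (b) c(α, t_0) = − ∑_{j ∉ S} c(α + (s−1)(t_0 − j), j), i.e., the first (s−1)(t_1 − t_0) symbols of column t_0 are each determined by symbols of non-straggler columns alone. -/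
open Finset

/-- Phase 0 of the peeling decoder for the `CP(n, n-s)` code.  Let `t 0 < t 1 < ⋯ < t (s-1)`
be the straggler columns.  If `c` vanishes at negative row indices and satisfies the
slope-`(s-1)` constraint `∑_{j<n} c(i - (s-1) j, j) = 0` for every `i ∈ ℤ`, then for every
`α` with `0 ≤ α ≤ (s-1)(t 1 - t 0) - 1`:
(a) for every `q ∈ {1, …, s-1}` the index `α + (s-1)(t 0 - t q)` is negative, hence the
corresponding symbol vanishes; and
(b) `c(α, t 0)` equals minus the sum of the symbols `c(α + (s-1)(t 0 - j), j)` over the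
non-straggler columns `j`, i.e. it is determined by non-straggler columns alone. -/
theorem cp_peeling_decoder_phase_zero (n s : ℕ) (hn : 1 ≤ n) (hs : 2 ≤ s) (hsn : s ≤ n)
    (t : Fin s → Fin n) (ht : StrictMono t)
    (c : ℤ → Fin n → ℝ)
    (hc0 : ∀ i : ℤ, i < 0 → ∀ j : Fin n, c i j = 0)
    (hconstr : ∀ i : ℤ,
      ∑ j : Fin n, c (i - ((s : ℤ) - 1) * ((j : ℕ) : ℤ)) j = 0)
    (α : ℤ) (hα0 : 0 ≤ α)
    (hα1 : α ≤ ((s : ℤ) - 1) *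
      (((t ⟨1, by omega⟩ : Fin n) : ℤ) - ((t ⟨0, by omega⟩ : Fin n) : ℤ)) - 1) :
    (∀ q : Fin s, 1 ≤ (q : ℕ) →
      α + ((s : ℤ) - 1) *
          (((t ⟨0, by omega⟩ : Fin n) : ℤ) - ((t q : Fin n) : ℤ)) < 0 ∧
        c (α + ((s : ℤ) - 1) *
          (((t ⟨0, by omega⟩ : Fin n) : ℤ) - ((t q : Fin n) : ℤ))) (t q) = 0)
    ∧
    c α (t ⟨0, by omega⟩) =
      - ∑ j ∈ Finset.univ.filter (fun j : Fin n => j ∉ Finset.image t Finset.univ),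
          c (α + ((s : ℤ) - 1) *
            (((t ⟨0, by omega⟩ : Fin n) : ℤ) - ((j : ℕ) : ℤ))) j := by
  set t0 : Fin n := t ⟨0, by omega⟩ with ht0
  set t1 : Fin n := t ⟨1, by omega⟩ with ht1
  have hs1 : (0:ℤ) < (s:ℤ) - 1 := by
    have : (2:ℤ) ≤ s := by exact_mod_cast hs
    omega
  have part_a : ∀ q : Fin s, 1 ≤ (q : ℕ) →
      α + ((s : ℤ) - 1) * ((t0 : ℤ) - ((t q : Fin n) : ℤ)) < 0 := by
    intro q hq
    have h1q : (⟨1, by omega⟩ : Fin s) ≤ q := by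
      simpa [Fin.le_def] using hq
    have ht1q : (t1 : ℕ) ≤ (t q : ℕ) := by
      rcases eq_or_lt_of_le h1q with h | h
      · rw [ht1, h]
      · exact le_of_lt (by exact_mod_cast ht h)
    have key : ((s : ℤ) - 1) * ((t q : ℤ) - (t0 : ℤ)) ≥
        ((s : ℤ) - 1) * ((t1 : ℤ) - (t0 : ℤ)) := by
      apply mul_le_mul_of_nonneg_left _ (le_of_lt hs1)
      have : ((t1 : ℕ) : ℤ) ≤ ((t q : ℕ) : ℤ) := by exact_mod_cast ht1q
      omega
    nlinarith
  have hzero : ∀ q : Fin s, 1 ≤ (q : ℕ) →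
      c (α + ((s : ℤ) - 1) * ((t0 : ℤ) - ((t q : Fin n) : ℤ))) (t q) = 0 := by
    intro q hq
    exact hc0 _ (part_a q hq) _
  refine ⟨fun q hq => ⟨part_a q hq, hzero q hq⟩, ?_⟩
  have hsum := hconstr (α + ((s : ℤ) - 1) * (t0 : ℤ))
  have hsum' : ∑ j : Fin n, c (α + ((s : ℤ) - 1) * ((t0 : ℤ) - ((j : ℕ) : ℤ))) j = 0 := by
    rw [← hsum]
    apply Finset.sum_congr rfl
    intro j _
    ring_nf
  set f : Fin n → ℝ := fun j => c (α + ((s : ℤ) - 1) * ((t0 : ℤ) - ((j : ℕ) : ℤ))) j with hf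
  have hsplit : ∑ j : Fin n, f j =
      (∑ j ∈ Finset.univ.filter (fun j : Fin n => j ∈ Finset.image t Finset.univ), f j) +
      (∑ j ∈ Finset.univ.filter (fun j : Fin n => j ∉ Finset.image t Finset.univ), f j) := by
    have h := Finset.sum_filter_add_sum_filter_not (Finset.univ : Finset (Fin n))
      (fun j : Fin n => j ∈ Finset.image t Finset.univ) f
    linarith
  have himg : ∑ j ∈ Finset.univ.filter (fun j : Fin n => j ∈ Finset.image t Finset.univ), f j
      = ∑ q : Fin s, f (t q) := by
    have heq : Finset.univ.filter (fun j : Fin n => j ∈ Finset.image t Finset.univ) =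
        Finset.image t Finset.univ := by
      ext j; simp
    rw [heq]
    exact (Finset.sum_image (f := f) (g := t) (s := Finset.univ) (fun a _ b _ h => ht.injective h))
  have hfq : ∀ q : Fin s, 1 ≤ (q : ℕ) → f (t q) = 0 := fun q hq => hzero q hq
  have hsums : ∑ q : Fin s, f (t q) = f t0 := by
    rw [← Finset.sum_subset (Finset.subset_univ {(⟨0, by omega⟩ : Fin s)})]
    · simp [ht0]
    · intro q _ hq
      apply hfq
      simp only [Finset.mem_singleton] at hq
      have : (q : ℕ) ≠ 0 := fun h => hq (Fin.ext h)
      omega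
  have hft0 : f t0 = c α t0 := by
    simp [hf]
  have := hsum'
  rw [hsplit, himg, hsums, hft0] at this
  linarith
end
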